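/- arXiv:2404.11496 — 4 statements merged into one kernel-verified Lean document; each statement's English description precedes it below -/
import Mathlib

section
/- Fix n ≥ k ≥ 2 and position i ∈ [1..n]. The number of feasible fitness vectors (f_LO, f_TZ) with f_LO ≥ i (all of which force bit 1 at position i) equals (n-i+1)(n-i+2)/2 - (n-i) - [i < n-k]·(n-k-i)(n-k-i+1)/2, where feasible means f_LO + f_TZ ≥ n - k, f_LO + f_TZ ≤ n, and f_LO + f_TZ ≠ n - 1. -/
/-- The set of feasible fitness vectors of LOTZ_k: pairs `(f_LO, f_TZ)` with
`n - k ≤ f_LO + f_TZ ≤ n` and `f_LO + f_TZ ≠ n - 1`. -/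
def feasibleVectors (n k : ℕ) : Finset (ℕ × ℕ) :=
  (Finset.range (n + 1) ×ˢ Finset.range (n + 1)).filter
    (fun p => n - k ≤ p.1 + p.2 ∧ p.1 + p.2 ≤ n ∧ p.1 + p.2 ≠ n - 1)

private def triAux (m : ℕ) : ℕ := m * (m + 1) / 2

private lemma triAux_succ (m : ℕ) : triAux (m + 1) = triAux m + (m + 1) := by
  unfold triAux
  obtain ⟨a, ha⟩ := Nat.even_mul_succ_self m
  have h : (m + 1) * (m + 1 + 1) = a + a + 2 * (m + 1) := by rw [← ha]; ring
  rw [h, ha]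
  omega

private lemma slice_card (n k i : ℕ) (hk : 2 ≤ k) (hkn : k ≤ n) (hi1 : 1 ≤ i)
    (hin : i < n) :
    ((feasibleVectors n k).filter (fun p => p.1 = i)).card = (n - i) - (n - k - i) := by
  have himg : (feasibleVectors n k).filter (fun p => p.1 = i) =
      ((Finset.Icc (n - k - i) (n - i)).erase (n - 1 - i)).image (fun b => (i, b)) := by
    ext ⟨a, b⟩
    simp only [feasibleVectors, Finset.mem_filter, Finset.mem_product, Finset.mem_range,
      Finset.mem_image, Finset.mem_erase, Finset.mem_Icc, Prod.mk.injEq]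
    constructor
    · rintro ⟨⟨⟨ha, hb⟩, h1, h2, h3⟩, rfl⟩
      exact ⟨b, ⟨by omega, by omega, by omega⟩, rfl, rfl⟩
    · rintro ⟨b', ⟨hne, hlo, hhi⟩, rfl, rfl⟩
      refine ⟨⟨⟨by omega, by omega⟩, by omega, by omega, by omega⟩, rfl⟩
  rw [himg, Finset.card_image_of_injective _ (by intro x y h; simpa using h),
    Finset.card_erase_of_mem (by simp [Finset.mem_Icc]; omega), Nat.card_Icc]
  omega

private lemma split_card (n k i : ℕ) :
    ((feasibleVectors n k).filter (fun p => i ≤ p.1)).card =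
      ((feasibleVectors n k).filter (fun p => i + 1 ≤ p.1)).card +
      ((feasibleVectors n k).filter (fun p => p.1 = i)).card := by
  rw [← Finset.card_union_of_disjoint, ← Finset.filter_or]
  · apply Finset.card_nbij' id id <;> simp +contextual [Finset.mem_filter, Set.MapsTo, Set.LeftInvOn, Set.RightInvOn] <;> omega
  · rw [Finset.disjoint_left]
    intro p hp hq
    simp only [Finset.mem_filter] at hp hq
    omega

private lemma top_card (n k : ℕ) (hk : 2 ≤ k) (hkn : k ≤ n) :
    ((feasibleVectors n k).filter (fun p => n ≤ p.1)).card = 1 := by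
  have : (feasibleVectors n k).filter (fun p => n ≤ p.1) = {(n, 0)} := by
    ext ⟨a, b⟩
    simp only [feasibleVectors, Finset.mem_filter, Finset.mem_product, Finset.mem_range,
      Finset.mem_singleton, Prod.mk.injEq]
    omega
  rw [this]; rfl

private lemma additive (n k : ℕ) (hk : 2 ≤ k) (hkn : k ≤ n) :
    ∀ d i, i = n - d → 1 ≤ i →
      ((feasibleVectors n k).filter (fun p => i ≤ p.1)).card + (n - i) +
        (if i < n - k then triAux (n - k - i) else 0) = triAux (n - i + 1) := by
  intro d
  induction d with
  | zero =>
    intro i hi hi1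
    rw [Nat.sub_zero] at hi
    subst hi
    rw [Nat.sub_self, if_neg (by omega), top_card _ k hk hkn]
    rfl
  | succ d ih =>
    intro i hi hi1
    have hdn : d + 1 ≤ n := by omega
    have hin : i < n := by omega
    have hIH := ih (i + 1) (by omega) (by omega)
    have e1 : n - (i + 1) = n - i - 1 := by omega
    have e2 : n - i - 1 + 1 = n - i := by omega
    have e3 : n - k - (i + 1) = n - k - i - 1 := by omega
    rw [e1, e2, e3] at hIH
    rw [split_card n k i, slice_card n k i hk hkn hi1 hin]
    have htA : triAux (n - i) + (n - i + 1) = triAux (n - i + 1) := by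
      rw [triAux_succ]
    by_cases hc : i < n - k
    · have hB1 : 1 ≤ n - k - i := by omega
      have htB : triAux (n - k - i - 1) + (n - k - i) = triAux (n - k - i) := by
        have := triAux_succ (n - k - i - 1)
        rw [show n - k - i - 1 + 1 = n - k - i by omega] at this
        omega
      rw [if_pos hc]
      by_cases hc2 : i + 1 < n - k
      · rw [if_pos hc2] at hIH
        omega
      · rw [if_neg hc2] at hIH
        have : n - k - i - 1 = 0 := by omega
        rw [this] at htB
        have h0 : triAux 0 = 0 := rfl
        omega
    · rw [if_neg hc]
      rw [if_neg (by omega)] at hIH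
      omega

theorem card_M1_triangle (n k i : ℕ) (hk : 2 ≤ k) (hkn : k ≤ n)
    (hi1 : 1 ≤ i) (hin : i ≤ n) :
    ((feasibleVectors n k).filter (fun p => i ≤ p.1)).card =
      (n - i + 1) * (n - i + 2) / 2 - (n - i) -
        (if i < n - k then (n - k - i) * (n - k - i + 1) / 2 else 0) := by
  have key := additive n k hk hkn (n - i) i (by omega) hi1
  have e1 : (n - i + 1) * (n - i + 2) / 2 = triAux (n - i + 1) := by
    unfold triAux
    rw [show n - i + 1 + 1 = n - i + 2 by omega]
  have e2 : (n - k - i) * (n - k - i + 1) / 2 = triAux (n - k - i) := rfl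
  rw [e1, e2]
  by_cases hc : i < n - k
  · rw [if_pos hc] at key ⊢
    omega
  · rw [if_neg hc] at key ⊢
    omega
end

section
/- Fix n ≥ k ≥ 2 and position i ∈ [1..n]. The number of feasible fitness vectors (f_LO, f_TZ) that do not determine the bit at position i, namely those with f_LO < i - 1, f_TZ < n - i, and f_LO + f_TZ ≥ n - k, equals m(i) = min(k-2, i-1)·min(k-2, n-i) - a(i)(a(i)+1)/2, where a(i) = max(0, min(k-3, i-2, n-i-1, n-k)). -/
/-- Triangle numbers. -/
def tri (x : ℕ) : ℕ := x * (x + 1) / 2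

lemma two_tri (x : ℕ) : 2 * tri x = x * (x + 1) := by
  have h : 2 ∣ x * (x + 1) := (Nat.even_mul_succ_self x).two_dvd
  unfold tri; omega

lemma tri_zero : tri 0 = 0 := rfl

lemma tri_succ (x : ℕ) : tri (x + 1) = tri x + (x + 1) := by
  have h1 := two_tri x
  have h2 := two_tri (x + 1)
  have h3 : (x + 1) * (x + 1 + 1) = x * (x + 1) + 2 * (x + 1) := by ring
  omega

lemma tri_pred (x : ℕ) : tri x = tri (x - 1) + x := by
  cases x with
  | zero => simp [tri_zero]
  | succ y => simpa using tri_succ y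

/-- Key summation formula. -/
lemma sum_formula (B C : ℕ) : ∀ A : ℕ,
    (∑ a ∈ Finset.range A, (B - (C - a))) + tri C + tri (C - (A + B)) =
      A * B + tri (C - A) + tri (C - B) := by
  intro A
  induction A with
  | zero => simp
  | succ A ih =>
    rw [Finset.sum_range_succ]
    have h1 : tri (C - A) = tri (C - (A + 1)) + (C - A) := by
      have := tri_pred (C - A)
      have e : C - A - 1 = C - (A + 1) := by omega
      rw [e] at this; exact this
    have h2 : tri (C - (A + B)) = tri (C - (A + 1 + B)) + (C - (A + B)) := by
      have := tri_pred (C - (A + B))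
      have e : C - (A + B) - 1 = C - (A + 1 + B) := by omega
      rw [e] at this; exact this
    have h3 : (A + 1) * B = A * B + B := by ring
    omega

/-- The main combinatorial identity. -/
lemma key_identity (A B C : ℕ) (h : C + 1 ≤ A + B) :
    A * B + tri (C - A) + tri (C - B) +
      tri (min (A + B - 2 - C) (min (A - 1) (min (B - 1) C))) =
    min (A + B - 1 - C) A * min (A + B - 1 - C) B + tri C := by
  rcases Nat.eq_zero_or_pos A with hA | hA
  · subst hA
    rw [show min (0 + B - 1 - C) 0 = 0 by omega,
        show min (0 + B - 2 - C) (min (0 - 1) (min (B - 1) C)) = 0 by omega,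
        show C - 0 = C by omega, show C - B = 0 by omega]
    simp [tri_zero]
  rcases Nat.eq_zero_or_pos B with hB | hB
  · subst hB
    rw [show min (A + 0 - 1 - C) 0 = 0 by omega,
        show min (A + 0 - 2 - C) (min (A - 1) (min (0 - 1) C)) = 0 by omega,
        show C - 0 = C by omega, show C - A = 0 by omega]
    simp [tri_zero]
  rcases lt_or_ge C A with hCA | hCA
  · rcases lt_or_ge C B with hCB | hCB
    · -- C < A, C < B
      rw [show min (A + B - 1 - C) A = A by omega,
          show min (A + B - 1 - C) B = B by omega,
          show min (A + B - 2 - C) (min (A - 1) (min (B - 1) C)) = C by omega,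
          show C - A = 0 by omega, show C - B = 0 by omega]
      simp [tri_zero]
    · -- B ≤ C < A  (m = B - 1, X = D * B)
      rw [show min (A + B - 1 - C) A = A + B - 1 - C by omega,
          show min (A + B - 1 - C) B = B by omega,
          show min (A + B - 2 - C) (min (A - 1) (min (B - 1) C)) = B - 1 by omega,
          show C - A = 0 by omega]
      have hu := two_tri (C - B)
      have hv := two_tri (B - 1)
      have hw := two_tri C
      have hmain : 2 * (A * B) + (C - B) * (C - B + 1) + (B - 1) * (B - 1 + 1) =
          2 * ((A + B - 1 - C) * B) + C * (C + 1) := by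
        zify [show B ≤ C from hCB, show 1 ≤ B from hB, show C ≤ A + B - 1 by omega,
          show 1 ≤ A + B by omega]
        ring
      simp [tri_zero]
      omega
  · rcases lt_or_ge C B with hCB | hCB
    · -- A ≤ C < B  (m = A - 1, X = A * D)
      rw [show min (A + B - 1 - C) A = A by omega,
          show min (A + B - 1 - C) B = A + B - 1 - C by omega,
          show min (A + B - 2 - C) (min (A - 1) (min (B - 1) C)) = A - 1 by omega,
          show C - B = 0 by omega]
      have hu := two_tri (C - A)
      have hv := two_tri (A - 1)
      have hw := two_tri C
      have hmain : 2 * (A * B) + (C - A) * (C - A + 1) + (A - 1) * (A - 1 + 1) =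
          2 * (A * (A + B - 1 - C)) + C * (C + 1) := by
        zify [show A ≤ C from hCA, show 1 ≤ A from hA, show C ≤ A + B - 1 by omega,
          show 1 ≤ A + B by omega]
        ring
      simp [tri_zero]
      omega
    · -- A ≤ C, B ≤ C  (m = D - 1, X = D * D)
      rw [show min (A + B - 1 - C) A = A + B - 1 - C by omega,
          show min (A + B - 1 - C) B = A + B - 1 - C by omega,
          show min (A + B - 2 - C) (min (A - 1) (min (B - 1) C)) = A + B - 2 - C
            by omega]
      have hu := two_tri (C - A)
      have hv := two_tri (C - B)
      have hm := two_tri (A + B - 2 - C)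
      have hw := two_tri C
      rcases lt_or_ge C (A + B - 1) with hC2 | hC2
      · have hmain : 2 * (A * B) + (C - A) * (C - A + 1) + (C - B) * (C - B + 1) +
              (A + B - 2 - C) * (A + B - 2 - C + 1) =
            2 * ((A + B - 1 - C) * (A + B - 1 - C)) + C * (C + 1) := by
          zify [show A ≤ C from hCA, show B ≤ C from hCB, show C ≤ A + B - 1 by omega,
            show C ≤ A + B - 2 by omega, show 1 ≤ A + B by omega, show 2 ≤ A + B by omega]
          ring
        omega
      · -- C = A + B - 1
        have hC : C = A + B - 1 := by omega
        rw [show A + B - 1 - C = 0 by omega, show A + B - 2 - C = 0 by omega, tri_zero]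
        have hmain : 2 * (A * B) + (C - A) * (C - A + 1) + (C - B) * (C - B + 1) =
            C * (C + 1) := by
          zify [show A ≤ C from hCA, show B ≤ C from hCB]
          rw [show (C : ℤ) = (A : ℤ) + B - 1 by omega]
          ring
        omega

theorem card_free_vectors (n k i : ℕ) (hk : 2 ≤ k) (hkn : k ≤ n)
    (hi1 : 1 ≤ i) (hin : i ≤ n) :
    ((feasibleVectors n k).filter (fun p => p.1 < i - 1 ∧ p.2 < n - i)).card =
      min (k - 2) (i - 1) * min (k - 2) (n - i) -
        (min (k - 3) (min (i - 2) (min (n - i - 1) (n - k)))) *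
          ((min (k - 3) (min (i - 2) (min (n - i - 1) (n - k)))) + 1) / 2 := by
  have hset : (feasibleVectors n k).filter (fun p => p.1 < i - 1 ∧ p.2 < n - i) =
      (Finset.range (i - 1) ×ˢ Finset.range (n - i)).filter
        (fun p => n - k ≤ p.1 + p.2) := by
    ext ⟨a, b⟩
    simp only [feasibleVectors, Finset.mem_filter, Finset.mem_product, Finset.mem_range]
    constructor
    · rintro ⟨⟨⟨ha, hb⟩, h1, h2, h3⟩, h4, h5⟩; exact ⟨⟨h4, h5⟩, h1⟩
    · rintro ⟨⟨h4, h5⟩, h1⟩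
      refine ⟨⟨⟨by omega, by omega⟩, h1, by omega, by omega⟩, h4, h5⟩
  rw [hset]
  have hcard : ((Finset.range (i - 1) ×ˢ Finset.range (n - i)).filter
        (fun p => n - k ≤ p.1 + p.2)).card =
      ∑ a ∈ Finset.range (i - 1), ((n - i) - ((n - k) - a)) := by
    rw [Finset.card_filter, Finset.sum_product]
    refine Finset.sum_congr rfl fun a _ => ?_
    rw [← Finset.card_filter]
    have : (Finset.range (n - i)).filter (fun b => n - k ≤ a + b) =
        Finset.Ico ((n - k) - a) (n - i) := by
      ext b
      simp only [Finset.mem_filter, Finset.mem_range, Finset.mem_Ico]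
      omega
    rw [this, Nat.card_Ico]
  rw [hcard]
  have hsum := sum_formula (n - i) (n - k) (i - 1)
  have hkey := key_identity (i - 1) (n - i) (n - k) (by omega)
  rw [show (n - k) - ((i - 1) + (n - i)) = 0 by omega, tri_zero] at hsum
  rw [show min (k - 2) (i - 1) = min ((i - 1) + (n - i) - 1 - (n - k)) (i - 1) by omega,
      show min (k - 2) (n - i) = min ((i - 1) + (n - i) - 1 - (n - k)) (n - i) by omega,
      show min (k - 3) (min (i - 2) (min (n - i - 1) (n - k))) =
        min ((i - 1) + (n - i) - 2 - (n - k)) (min ((i - 1) - 1) (min ((n - i) - 1) (n - k)))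
        by omega,
      show (min ((i - 1) + (n - i) - 2 - (n - k)) (min ((i - 1) - 1) (min ((n - i) - 1) (n - k)))) *
          ((min ((i - 1) + (n - i) - 2 - (n - k)) (min ((i - 1) - 1) (min ((n - i) - 1) (n - k)))) + 1) / 2 =
        tri (min ((i - 1) + (n - i) - 2 - (n - k)) (min ((i - 1) - 1) (min ((n - i) - 1) (n - k))))
        from rfl]
  omega
end

section
/- For n ≥ k ≥ 2 and position i ∈ [1..n], the count of feasible fitness vectors forcing bit 0 at position i equals m_0(i) = i(i-1)/2 - [i > k+1]·(i-k-1)(i-k)/2 + min(n-i+1, k). -/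
lemma helper_consec_M0 (u : ℕ) : u * (u - 1) = (u - 1) * (u - 2) + 2 * (u - 1) := by
  rcases u with _ | _ | v
  · simp
  · simp
  · show (v+2)*(v+2-1) = (v+2-1)*(v+2-2) + 2*(v+2-1)
    simp only [Nat.add_sub_cancel, show v+2-1 = v+1 from rfl, show v+2-2 = v from rfl]
    ring

lemma sumaux_M0 (i : ℕ) : ∀ k : ℕ, ∑ j ∈ Finset.range (k+1), (j + i - k) = i*(i+1)/2 - (i-k)*(i-k-1)/2 := by
  intro k
  induction k with
  | zero =>
    simp only [Finset.sum_range_one, Nat.sub_zero, Nat.zero_add, Nat.add_zero]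
    have h1 : i * (i+1) = i * (i-1) + 2*i := by
      rcases i with _ | j
      · simp
      · simp only [Nat.succ_sub_one]; ring
    have he : 2 ∣ i * (i+1) := (Nat.even_mul_succ_self i).two_dvd
    omega
  | succ k ih =>
    rw [Finset.sum_range_succ']
    have hr : ∀ j, (j + 1) + i - (k+1) = j + i - k := by intro j; omega
    simp only [hr]
    rw [ih]
    have hc := helper_consec_M0 (i - k)
    have h3 : i - (k+1) = i - k - 1 := by omega
    rw [h3, show i-k-1-1 = i-k-2 by omega]
    have h5 : (i-k)*(i-k-1) ≤ i*(i+1) := Nat.mul_le_mul (by omega) (by omega)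
    generalize i*(i+1) = R at *
    generalize hP : (i-k)*(i-k-1) = P at *
    generalize (i-k-1)*(i-k-2) = Q at *
    omega

theorem card_M0 (n k i : ℕ) (hk : 2 ≤ k) (hkn : k ≤ n)
    (hi1 : 1 ≤ i) (hin : i ≤ n) :
    ((feasibleVectors n k).filter (fun p => p.1 = i - 1 ∨ n - i + 1 ≤ p.2)).card =
      i * (i - 1) / 2 - (if k + 1 < i then (i - k - 1) * (i - k) / 2 else 0) +
        min (n - i + 1) k := by
  classical
  set F : Finset ℕ := (Finset.range (n+1)).filter (fun s => n - k ≤ s ∧ s ≠ n - 1) with hF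
  set A : ℕ → Finset ℕ := fun s => (Finset.range (n+1)).filter
      (fun a => a ≤ s ∧ (a = i - 1 ∨ a + (n - i + 1) ≤ s)) with hA
  have hset : (feasibleVectors n k).filter (fun p => p.1 = i - 1 ∨ n - i + 1 ≤ p.2)
      = F.biUnion (fun s => (A s).image (fun a => (a, s - a))) := by
    ext ⟨a, b⟩
    simp only [feasibleVectors, Finset.mem_filter, Finset.mem_product, Finset.mem_range,
      Finset.mem_biUnion, Finset.mem_image, hF, hA, Prod.mk.injEq]
    constructor
    · rintro ⟨⟨⟨ha, hb⟩, h1, h2, h3⟩, h4⟩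
      exact ⟨a + b, ⟨by omega, by omega, by omega⟩, a, ⟨by omega, by omega, by omega⟩,
        rfl, by omega⟩
    · rintro ⟨s, ⟨hs1, hs2, hs3⟩, a', ⟨ha1, ha2, ha3⟩, rfl, rfl⟩
      refine ⟨⟨⟨by omega, by omega⟩, by omega, by omega, by omega⟩, by omega⟩
  rw [hset]
  have hdisj : ∀ s ∈ F, ∀ t ∈ F, s ≠ t →
      Disjoint ((A s).image (fun a => (a, s - a))) ((A t).image (fun a => (a, t - a))) := by
    intro s hs t ht hst
    rw [Finset.disjoint_left]
    rintro ⟨x, y⟩ hxs hxt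
    simp only [hA, Finset.mem_image, Finset.mem_filter, Finset.mem_range, Prod.mk.injEq] at hxs hxt
    obtain ⟨a, ⟨_, ha2, _⟩, rfl, rfl⟩ := hxs
    obtain ⟨a', ⟨_, hb2, _⟩, h1, h2⟩ := hxt
    omega
  rw [Finset.card_biUnion hdisj]
  have hinj : ∀ s : ℕ, ((A s).image (fun a => (a, s - a))).card = (A s).card := by
    intro s
    apply Finset.card_image_of_injective
    intro a b hab
    exact congrArg Prod.fst hab
  have hcardA : ∀ s ∈ F, (A s).card = (s + i - n) + (if i - 1 ≤ s ∧ s < n then 1 else 0) := by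
    intro s hs
    simp only [hF, Finset.mem_filter, Finset.mem_range] at hs
    obtain ⟨hs1, hs2, hs3⟩ := hs
    by_cases hc : i - 1 ≤ s ∧ s < n
    · have : A s = Finset.range (s + i - n) ∪ {i - 1} := by
        ext a
        simp only [hA, Finset.mem_filter, Finset.mem_range, Finset.mem_union,
          Finset.mem_singleton]
        omega
      rw [this, Finset.card_union_of_disjoint (by
        simp only [Finset.disjoint_singleton_right, Finset.mem_range]; omega)]
      rw [Finset.card_range, Finset.card_singleton, if_pos hc]
    · have : A s = Finset.range (s + i - n) := by
        ext a
        simp only [hA, Finset.mem_filter, Finset.mem_range]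
        omega
      rw [this, Finset.card_range, if_neg hc, Nat.add_zero]
  have hsum : ∑ s ∈ F, ((A s).image (fun a => (a, s - a))).card
      = (∑ s ∈ F, (s + i - n)) + ∑ s ∈ F, (if i - 1 ≤ s ∧ s < n then 1 else 0) := by
    rw [← Finset.sum_add_distrib]
    refine Finset.sum_congr rfl fun s hs => ?_
    rw [hinj s, hcardA s hs]
  rw [hsum]
  -- second sum
  have h2 : ∑ s ∈ F, (if i - 1 ≤ s ∧ s < n then 1 else 0)
      = (n - 1) - max (n - k) (i - 1) := by
    rw [← Finset.card_filter]
    have : F.filter (fun s => i - 1 ≤ s ∧ s < n) = Finset.Ico (max (n - k) (i - 1)) (n - 1) := by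
      ext s
      simp only [hF, Finset.filter_filter, Finset.mem_filter, Finset.mem_range, Finset.mem_Ico]
      omega
    rw [this, Nat.card_Ico]
  -- first sum
  have hFe : F = (Finset.Icc (n - k) n).erase (n - 1) := by
    ext s
    simp only [hF, Finset.mem_filter, Finset.mem_range, Finset.mem_erase, Finset.mem_Icc]
    omega
  have h1 : (∑ s ∈ F, (s + i - n)) + (i - 1) = ∑ s ∈ Finset.Icc (n - k) n, (s + i - n) := by
    rw [hFe]
    have hmem : n - 1 ∈ Finset.Icc (n - k) n := by
      simp only [Finset.mem_Icc]; omega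
    have := Finset.sum_erase_add (Finset.Icc (n - k) n) (fun s => s + i - n) hmem
    simpa [show n - 1 + i - n = i - 1 by omega] using this
  have h3 : ∑ s ∈ Finset.Icc (n - k) n, (s + i - n) = i*(i+1)/2 - (i-k)*(i-k-1)/2 := by
    rw [← Finset.Ico_add_one_right_eq_Icc, Finset.sum_Ico_eq_sum_range]
    have hkk : n + 1 - (n - k) = k + 1 := by omega
    rw [hkk]
    rw [← sumaux_M0 i k]
    refine Finset.sum_congr rfl fun j hj => ?_
    omega
  rw [h2]
  have h4 : (i-k)*(i-k-1) ≤ i*(i+1) := Nat.mul_le_mul (by omega) (by omega)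
  have h5 : i * (i+1) = i * (i-1) + 2*i := by
    rcases i with _ | j
    · simp
    · simp only [Nat.succ_sub_one]; ring
  have h6 : (i - k - 1) * (i - k) = (i-k)*(i-k-1) := Nat.mul_comm _ _
  have h7 : i ≤ k + 1 → (i - k - 1) * (i - k) = 0 := by
    intro h; rw [show i - k - 1 = 0 by omega]; ring
  have h8 : 2 ∣ i * (i+1) := (Nat.even_mul_succ_self i).two_dvd
  have h4b : (i-k)*(i-k-1) ≤ i*(i-1) := Nat.mul_le_mul (by omega) (by omega)
  have h8b : 2 ∣ (i-k)*(i-k-1) := by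
    rcases hik : i - k with _ | m
    · simp
    · rw [show m + 1 - 1 = m from rfl, Nat.mul_comm]
      exact (Nat.even_mul_succ_self m).two_dvd
  rw [h3] at h1
  by_cases hik : k + 1 < i
  · rw [if_pos hik]
    generalize i*(i+1) = R at *
    generalize hP : (i-k)*(i-k-1) = P at *
    rw [h6]
    omega
  · rw [if_neg hik]
    have h9 := h7 (by omega)
    generalize i*(i+1) = R at *
    generalize hP : (i-k)*(i-k-1) = P at *
    omega
end

section
/- Let n ≥ k ≥ 2 and let x, y ∈ {0,1}^n both be feasible (LO + TZ ≥ n - k). Then neither dominates the other with respect to the three-objective function LOTZ_k(x) = (LO(x), TZ(x), h(LO(x)+TZ(x))), where h(u) = 0 if u < n-k and h(u) = n+1-u if u ≥ n-k. -/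
/-- Length of the longest all-ones prefix of the bit string `x`. -/
def LO (n : ℕ) (x : Fin n → Bool) : ℕ :=
  (Finset.univ.filter (fun i : Fin n => ∀ j ≤ i, x j = true)).card

/-- Length of the longest all-zeros suffix of the bit string `x`. -/
def TZ (n : ℕ) (x : Fin n → Bool) : ℕ :=
  (Finset.univ.filter (fun i : Fin n => ∀ j, i ≤ j → x j = false)).card

/-- The third objective of LOTZ_k. -/
def hObj (n k u : ℕ) : ℕ := if u < n - k then 0 else n + 1 - u

/-- The three-objective fitness vector of LOTZ_k. -/
def lotz (n k : ℕ) (x : Fin n → Bool) : ℕ × ℕ × ℕ :=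
  (LO n x, TZ n x, hObj n k (LO n x + TZ n x))

/-- Domination for a three-objective (maximization) function. -/
def Dominates (u v : ℕ × ℕ × ℕ) : Prop :=
  (v.1 ≤ u.1 ∧ v.2.1 ≤ u.2.1 ∧ v.2.2 ≤ u.2.2) ∧
    (v.1 < u.1 ∨ v.2.1 < u.2.1 ∨ v.2.2 < u.2.2)

lemma sum_LO_TZ_le (n : ℕ) (x : Fin n → Bool) : LO n x + TZ n x ≤ n := by
  classical
  have hd : Disjoint
      (Finset.univ.filter (fun i : Fin n => ∀ j ≤ i, x j = true))
      (Finset.univ.filter (fun i : Fin n => ∀ j, i ≤ j → x j = false)) := by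
    rw [Finset.disjoint_filter]
    intro i _ hA hB
    have h1 : x i = true := hA i le_rfl
    have h2 : x i = false := hB i le_rfl
    simp [h1] at h2
  have := Finset.card_union_of_disjoint hd
  have hle := Finset.card_le_card (Finset.subset_univ
      (Finset.univ.filter (fun i : Fin n => ∀ j ≤ i, x j = true) ∪
       Finset.univ.filter (fun i : Fin n => ∀ j, i ≤ j → x j = false)))
  rw [this] at hle
  simpa [LO, TZ] using hle

lemma nondom (n k : ℕ) (x y : Fin n → Bool) (hx : n - k ≤ LO n x + TZ n x)
    (hy : n - k ≤ LO n y + TZ n y) (hxn : LO n x + TZ n x ≤ n)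
    (hyn : LO n y + TZ n y ≤ n) : ¬Dominates (lotz n k x) (lotz n k y) := by
  rintro ⟨⟨h1, h2, h3⟩, hs⟩
  simp only [lotz, Dominates, hObj, if_neg (not_lt.2 hx), if_neg (not_lt.2 hy)] at h1 h2 h3 hs
  omega

theorem feasible_mutually_nondominated (n k : ℕ) (hk : 2 ≤ k) (hkn : k ≤ n)
    (x y : Fin n → Bool) (hx : n - k ≤ LO n x + TZ n x)
    (hy : n - k ≤ LO n y + TZ n y) :
    ¬Dominates (lotz n k x) (lotz n k y) ∧
    ¬Dominates (lotz n k y) (lotz n k x) := by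
  constructor <;> first
    | exact nondom n k x y hx hy (sum_LO_TZ_le n x) (sum_LO_TZ_le n y)
    | exact nondom n k y x hy hx (sum_LO_TZ_le n y) (sum_LO_TZ_le n x)
end
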